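/- arXiv:2308.14717 — 2 statements merged into one kernel-verified Lean document; each statement's English description precedes it below -/
import Mathlib

section
/- Let G be a symmetric n×n real matrix with nonnegative entries and zero diagonal, α > 0, β > 0, c > 0 with α·β·c < 1, and let σ ∈ ℝ^n with σ_i ≥ 0 satisfy diag(σ)·G·σ = c·σ (balanced neighborhood equity) and suppose I − α·β·diag(σ)·G is invertible. Fix distinct indices i, j, and for t near 0 define G(t) = G + t·(E_{ij} + E_{ji}), a(t) = α·(I − α·β·diag(σ)·G(t))^{-1}·σ, and Y(t) = Σ_l a_l(t) + (β/2)·Σ_{l,m} G(t)_{lm}·a_l(t)·a_m(t). Then Y is differentiable at t = 0 and Y'(0) = β·σ_i·σ_j·α²·( 2/(1 − α·β·c)³ + 1/(1 − α·β·c)² ). In particular, the marginal value of strengthening the link between i and j is proportional to the product σ_i·σ_j of their equity shares, with a proportionality constant independent of i and j. -/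
open Matrix Topology Filter

/-- in the linear case `P(Y) = α·Y`, under balanced neighborhood equity,
the marginal effect on equilibrium team performance of strengthening the link between
`i` and `j` is `β·σ_i·σ_j·α²·(2/(1 − α·β·c)³ + 1/(1 − α·β·c)²)`, proportional to the
product of the two agents' equity shares. -/
theorem statement_18 {n : ℕ} (G : Matrix (Fin n) (Fin n) ℝ)
    (hG_symm : G.IsSymm)
    (hG_nonneg : ∀ l m, 0 ≤ G l m)
    (hG_diag : ∀ l, G l l = 0)
    (α β c : ℝ) (hα : 0 < α) (hβ : 0 < β) (hc : 0 < c) (habc : α * β * c < 1)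
    (σ : Fin n → ℝ) (hσ : ∀ l, 0 ≤ σ l)
    (hbal : (Matrix.diagonal σ * G).mulVec σ = c • σ)
    (hinv : IsUnit ((1 : Matrix (Fin n) (Fin n) ℝ) - (α * β) • (Matrix.diagonal σ * G)))
    (i j : Fin n) (hij : i ≠ j)
    (Gt : ℝ → Matrix (Fin n) (Fin n) ℝ)
    (hGt : ∀ t, Gt t
      = G + t • (Matrix.single i j (1 : ℝ) + Matrix.single j i (1 : ℝ)))
    (a : ℝ → Fin n → ℝ)
    (ha : ∀ t, a t = α • ((1 : Matrix (Fin n) (Fin n) ℝ)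
        - (α * β) • (Matrix.diagonal σ * Gt t))⁻¹.mulVec σ)
    (Y : ℝ → ℝ)
    (hY : ∀ t, Y t = ∑ l, a t l + β / 2 * ∑ l, ∑ m, Gt t l m * a t l * a t m) :
    HasDerivAt Y
      (β * σ i * σ j * α ^ 2
        * (2 / (1 - α * β * c) ^ 3 + 1 / (1 - α * β * c) ^ 2)) 0 := by
  -- notation
  set d : ℝ := 1 - α * β * c with hd_def
  have hd : 0 < d := by rw [hd_def]; linarith
  have hd0 : d ≠ 0 := ne_of_gt hd
  set E : Matrix (Fin n) (Fin n) ℝ :=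
    Matrix.single i j (1 : ℝ) + Matrix.single j i (1 : ℝ) with hE_def
  set M0 : Matrix (Fin n) (Fin n) ℝ :=
    (1 : Matrix (Fin n) (Fin n) ℝ) - (α * β) • (Matrix.diagonal σ * G) with hM0_def
  set N : Matrix (Fin n) (Fin n) ℝ := (α * β) • (Matrix.diagonal σ * E) with hN_def
  set M : ℝ → Matrix (Fin n) (Fin n) ℝ :=
    fun t => (1 : Matrix (Fin n) (Fin n) ℝ) - (α * β) • (Matrix.diagonal σ * Gt t) with hM_def
  have hMt : ∀ t, M t = M0 - t • N := by
    intro t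
    show (1 : Matrix (Fin n) (Fin n) ℝ) - (α * β) • (Matrix.diagonal σ * Gt t) = M0 - t • N
    rw [hGt t, hM0_def, hN_def]
    rw [mul_add, Matrix.mul_smul, smul_add, sub_add_eq_sub_sub]
    rw [smul_comm (α * β) t]
  have hM0det : IsUnit M0.det := (Matrix.isUnit_iff_isUnit_det M0).mp hinv
  have hGt0 : Gt 0 = G := by rw [hGt]; simp
  have hM00 : M 0 = M0 := by rw [hMt]; simp
  have hM0det' : (M 0).det ≠ 0 := by rw [hM00]; exact hM0det.ne_zero
  -- continuity
  have hMcont : Continuous M := by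
    have h : M = fun t => M0 - t • N := funext hMt
    rw [h]
    exact continuous_const.sub (continuous_id.smul continuous_const)
  have hDcont : Continuous fun t => (M t).det := hMcont.matrix_det
  have hInvCont : ContinuousAt (fun t => (M t)⁻¹) 0 := by
    have h : (fun t => (M t)⁻¹) = fun t => ((M t).det)⁻¹ • (M t).adjugate := by
      funext t
      rw [Matrix.inv_def, Ring.inverse_eq_inv']
    rw [h]
    exact (hDcont.continuousAt.inv₀ hM0det').smul hMcont.matrix_adjugate.continuousAt
  -- basic vectors
  set u : Fin n → ℝ := fun l => (if l = i then (1:ℝ) else 0) + (if l = j then (1:ℝ) else 0)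
    with hu_def
  set C : ℝ := α ^ 2 * β * (σ i * σ j) / d with hC_def
  set v : ℝ → Fin n → ℝ := fun t => C • ((M t)⁻¹ *ᵥ u) with hv_def
  -- balance facts
  have hbal' : ∀ l, σ l * (G *ᵥ σ) l = c * σ l := by
    intro l
    have h := congrFun hbal l
    rw [← Matrix.mulVec_mulVec] at h
    simpa [Matrix.mulVec_diagonal] using h
  have hM0σ : M0 *ᵥ σ = d • σ := by
    rw [hM0_def, Matrix.sub_mulVec, Matrix.one_mulVec, Matrix.smul_mulVec, hbal,
      smul_smul, hd_def, sub_smul, one_smul]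
  have hM0invσ : M0⁻¹ *ᵥ σ = d⁻¹ • σ := by
    have h1 : M0⁻¹ *ᵥ (M0 *ᵥ σ) = σ := by
      rw [Matrix.mulVec_mulVec, Matrix.nonsing_inv_mul M0 hM0det, Matrix.one_mulVec]
    rw [hM0σ, Matrix.mulVec_smul] at h1
    exact ((inv_smul_eq_iff₀ hd0).mpr h1.symm).symm
  have ha0 : a 0 = (α / d) • σ := by
    rw [ha 0, hGt0, ← hM0_def, hM0invσ, smul_smul, ← div_eq_mul_inv]
  have hEmulVec : ∀ x : Fin n → ℝ,
      E *ᵥ x = fun l => (if l = i then x j else 0) + (if l = j then x i else 0) := by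
    intro x
    funext l
    rw [hE_def, Matrix.add_mulVec, Matrix.single_mulVec, Matrix.single_mulVec]
    simp [Function.update_apply]
  have hNσ : N *ᵥ σ = (α * β * (σ i * σ j)) • u := by
    rw [hN_def, Matrix.smul_mulVec, ← Matrix.mulVec_mulVec, hEmulVec]
    funext l
    simp only [Pi.smul_apply, smul_eq_mul, hu_def, Matrix.mulVec_diagonal]
    by_cases h1 : l = i
    · subst h1
      have h2 : l ≠ j := fun h => hij (by rw [← h])
      rw [if_pos rfl, if_pos rfl, if_neg h2, if_neg h2]
      ring
    · by_cases h2 : l = j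
      · subst h2
        rw [if_neg h1, if_neg h1, if_pos rfl, if_pos rfl]
        ring
      · rw [if_neg h1, if_neg h1, if_neg h2, if_neg h2]
        ring
  -- slope identity
  have hslope : ∀ t : ℝ, (M t).det ≠ 0 → a t - a 0 = t • v t := by
    intro t ht
    have htu : IsUnit (M t).det := isUnit_iff_ne_zero.mpr ht
    have key : (M t)⁻¹ - M0⁻¹ = t • ((M t)⁻¹ * N * M0⁻¹) := by
      have h2 : M0 - M t = t • N := by rw [hMt]; abel
      have h1 : (M t)⁻¹ * (M0 - M t) * M0⁻¹ = (M t)⁻¹ - M0⁻¹ := by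
        rw [mul_sub, sub_mul, mul_assoc ((M t)⁻¹) M0, Matrix.mul_nonsing_inv M0 hM0det,
          mul_one, Matrix.nonsing_inv_mul (M t) htu, one_mul]
      rw [← h1, h2, Matrix.mul_smul, Matrix.smul_mul]
    have hat : a t = α • ((M t)⁻¹ *ᵥ σ) := ha t
    have ha0' : a 0 = α • (M0⁻¹ *ᵥ σ) := by rw [ha 0, hGt0, ← hM0_def]
    rw [hat, ha0', ← smul_sub, ← Matrix.sub_mulVec, key]
    rw [Matrix.smul_mulVec, ← Matrix.mulVec_mulVec, ← Matrix.mulVec_mulVec, hM0invσ,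
      Matrix.mulVec_smul, hNσ, Matrix.mulVec_smul, Matrix.mulVec_smul]
    rw [hv_def]
    show α • t • d⁻¹ • (α * β * (σ i * σ j)) • ((M t)⁻¹ *ᵥ u)
      = t • C • ((M t)⁻¹ *ᵥ u)
    rw [smul_smul, smul_smul, smul_smul, smul_smul]
    congr 1
    rw [hC_def]
    field_simp
  -- derivative of each component of a
  have hDne : ∀ᶠ t in 𝓝 (0:ℝ), (M t).det ≠ 0 :=
    hDcont.continuousAt.eventually_ne hM0det'
  have hA : ∀ l, HasDerivAt (fun t => a t l) (v 0 l) 0 := by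
    intro l
    rw [hasDerivAt_iff_tendsto_slope]
    have hev : slope (fun t => a t l) 0 =ᶠ[𝓝[≠] (0:ℝ)] fun t => v t l := by
      filter_upwards [hDne.filter_mono nhdsWithin_le_nhds, self_mem_nhdsWithin] with t ht ht0
      have ht0' : t ≠ 0 := ht0
      have h2 := congrFun (hslope t ht) l
      simp only [Pi.sub_apply, Pi.smul_apply, smul_eq_mul] at h2
      rw [slope_def_field, sub_zero, h2]
      field_simp
    have hvc : ContinuousAt (fun t => v t l) 0 := by
      have houter : Continuous fun A : Matrix (Fin n) (Fin n) ℝ => (A *ᵥ u) l := by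
        have : (fun A : Matrix (Fin n) (Fin n) ℝ => (A *ᵥ u) l)
            = fun A => ∑ m, A l m * u m := by
          funext A; rfl
        rw [this]
        exact continuous_finset_sum _ fun m _ =>
          (continuous_id.matrix_elem l m).mul continuous_const
      have hcomp : ContinuousAt (fun t => ((M t)⁻¹ *ᵥ u) l) 0 :=
        houter.continuousAt.comp hInvCont
      exact continuousAt_const.mul hcomp
    exact ((hvc.tendsto).mono_left nhdsWithin_le_nhds).congr' hev.symm
  -- derivative of Y
  set a0 : Fin n → ℝ := a 0 with ha0_def
  set v0 : Fin n → ℝ := v 0 with hv0_def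
  have hGd : ∀ l m, HasDerivAt (fun t => Gt t l m) (E l m) 0 := by
    intro l m
    have h : (fun t => Gt t l m) = fun t => G l m + t * E l m := by
      funext t; rw [hGt t]; simp [Matrix.add_apply, Matrix.smul_apply, smul_eq_mul]
    rw [h]
    simpa using ((hasDerivAt_id (0:ℝ)).mul_const (E l m)).const_add (G l m)
  have hterm : ∀ l m, HasDerivAt (fun t => Gt t l m * a t l * a t m)
      ((E l m * a0 l + G l m * v0 l) * a0 m + G l m * a0 l * v0 m) 0 := by
    intro l m
    have h1 := ((hGd l m).fun_mul (hA l)).fun_mul (hA m)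
    have h2 : Gt 0 l m = G l m := by rw [hGt0]
    simpa [h2] using h1
  have hYd : HasDerivAt Y
      ((∑ l, v0 l) + β / 2 * ∑ l, ∑ m,
        ((E l m * a0 l + G l m * v0 l) * a0 m + G l m * a0 l * v0 m)) 0 := by
    have hfun : Y = fun t => ∑ l, a t l + β / 2 * ∑ l, ∑ m, Gt t l m * a t l * a t m :=
      funext hY
    rw [hfun]
    exact (HasDerivAt.fun_sum fun l _ => hA l).fun_add
      ((HasDerivAt.fun_sum fun l _ => HasDerivAt.fun_sum fun m _ => hterm l m).const_mul (β / 2))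
  convert hYd using 1
  -- final algebra
  have h1d : (1:ℝ) - α * β * c ≠ 0 := by rw [← hd_def]; exact hd0
  set θ : ℝ := α * β / d + α * β / d ^ 2 with hθ_def
  set w : Fin n → ℝ := fun l => 1 + θ * (G *ᵥ σ) l with hw_def
  set q : Fin n → ℝ := fun l => 1 + α * β / d * (G *ᵥ σ) l with hq_def
  set z : Fin n → ℝ := M0⁻¹ *ᵥ u with hz_def
  have hdiagw : Matrix.diagonal σ *ᵥ w = (1 + θ * c) • σ := by
    funext l
    simp only [Matrix.mulVec_diagonal, hw_def, Pi.smul_apply, smul_eq_mul]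
    linear_combination θ * hbal' l
  have hkey1 : M0ᵀ *ᵥ w = q := by
    have hM0T : M0ᵀ = 1 - (α * β) • (G * Matrix.diagonal σ) := by
      rw [hM0_def, Matrix.transpose_sub, Matrix.transpose_one, Matrix.transpose_smul,
        Matrix.transpose_mul, Matrix.diagonal_transpose, hG_symm]
    rw [hM0T, Matrix.sub_mulVec, Matrix.one_mulVec, Matrix.smul_mulVec,
      ← Matrix.mulVec_mulVec, hdiagw, Matrix.mulVec_smul]
    funext l
    simp only [Pi.sub_apply, Pi.smul_apply, smul_eq_mul, hw_def, hq_def]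
    simp only [hθ_def]
    rw [hd_def]
    field_simp
    ring
  have hMz : M0 *ᵥ z = u := by
    rw [hz_def, Matrix.mulVec_mulVec, Matrix.mul_nonsing_inv M0 hM0det, Matrix.one_mulVec]
  have hwu : w ⬝ᵥ u = w i + w j := by
    simp only [dotProduct, hu_def, mul_add, mul_ite, mul_one, mul_zero,
      Finset.sum_add_distrib]
    rw [Finset.sum_ite_eq' Finset.univ i w, Finset.sum_ite_eq' Finset.univ j w]
    simp
  have hqz : ∑ l, q l * z l = w i + w j := by
    have h0 : ∑ l, q l * z l = q ⬝ᵥ z := rfl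
    rw [h0, ← hkey1, Matrix.mulVec_transpose, ← Matrix.dotProduct_mulVec, hMz, hwu]
  have hv0' : ∀ l, v0 l = C * z l := by
    intro l
    rw [hv0_def, hv_def]
    show (C • ((M 0)⁻¹ *ᵥ u)) l = C * z l
    rw [hM00]
    rfl
  have hsplit : ∀ l m : Fin n, (E l m * a0 l + G l m * v0 l) * a0 m + G l m * a0 l * v0 m
      = E l m * (a0 l * a0 m) + G l m * v0 l * a0 m + G l m * a0 l * v0 m := by
    intros; ring
  have hsum : (∑ l, ∑ m, ((E l m * a0 l + G l m * v0 l) * a0 m + G l m * a0 l * v0 m))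
      = (∑ l, ∑ m, E l m * (a0 l * a0 m)) + (∑ l, ∑ m, G l m * v0 l * a0 m)
        + (∑ l, ∑ m, G l m * a0 l * v0 m) := by
    simp_rw [hsplit, Finset.sum_add_distrib]
  have hSE : (∑ l, ∑ m, E l m * (a0 l * a0 m)) = a0 i * a0 j + a0 j * a0 i := by
    have h1 : ∀ l, (∑ m, E l m * (a0 l * a0 m)) = a0 l * ((E *ᵥ a0) l) := by
      intro l
      rw [show (E *ᵥ a0) l = ∑ m, E l m * a0 m from rfl, Finset.mul_sum]
      exact Finset.sum_congr rfl fun m _ => by ring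
    simp_rw [h1, hEmulVec a0]
    simp only [mul_add, mul_ite, mul_zero, Finset.sum_add_distrib]
    rw [Finset.sum_ite_eq' Finset.univ i (fun l => a0 l * a0 j),
      Finset.sum_ite_eq' Finset.univ j (fun l => a0 l * a0 i)]
    simp
  have hGa0 : G *ᵥ a0 = (α / d) • (G *ᵥ σ) := by rw [ha0, Matrix.mulVec_smul]
  have hS2 : (∑ l, ∑ m, G l m * v0 l * a0 m) = ∑ l, v0 l * (α / d * (G *ᵥ σ) l) := by
    refine Finset.sum_congr rfl fun l _ => ?_
    have h1 : (∑ m, G l m * v0 l * a0 m) = v0 l * ((G *ᵥ a0) l) := by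
      rw [show (G *ᵥ a0) l = ∑ m, G l m * a0 m from rfl, Finset.mul_sum]
      exact Finset.sum_congr rfl fun m _ => by ring
    rw [h1, hGa0, Pi.smul_apply, smul_eq_mul]
  have hGsym : ∀ l m, G m l = G l m := fun l m => hG_symm.apply l m
  have hS3 : (∑ l, ∑ m, G l m * a0 l * v0 m) = ∑ l, ∑ m, G l m * v0 l * a0 m := by
    rw [Finset.sum_comm]
    refine Finset.sum_congr rfl fun l _ => Finset.sum_congr rfl fun m _ => ?_
    rw [hGsym l m]
    ring
  have hlin : (∑ l, v0 l) + β * (∑ l, v0 l * (α / d * (G *ᵥ σ) l)) = C * (w i + w j) := by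
    have h1 : (∑ l, v0 l) + β * (∑ l, v0 l * (α / d * (G *ᵥ σ) l))
        = ∑ l, q l * (C * z l) := by
      rw [Finset.mul_sum, ← Finset.sum_add_distrib]
      refine Finset.sum_congr rfl fun l _ => ?_
      rw [hv0' l]
      simp only [hq_def]
      ring
    have h2 : ∑ l, q l * (C * z l) = C * ∑ l, q l * z l := by
      rw [Finset.mul_sum]; exact Finset.sum_congr rfl fun l _ => by ring
    rw [h1, h2, hqz]
  have hwi : σ i * σ j * w i = (1 + θ * c) * (σ i * σ j) := by
    simp only [hw_def]
    linear_combination θ * σ j * hbal' i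
  have hwj : σ i * σ j * w j = (1 + θ * c) * (σ i * σ j) := by
    simp only [hw_def]
    linear_combination θ * σ i * hbal' j
  have hCw : C * (w i + w j) = α ^ 2 * β / d * (2 * (1 + θ * c)) * (σ i * σ j) := by
    calc C * (w i + w j)
        = α ^ 2 * β / d * (σ i * σ j * w i + σ i * σ j * w j) := by rw [hC_def]; ring
      _ = _ := by rw [hwi, hwj]; ring
  have ha0i : a0 i = α / d * σ i := by rw [ha0]; simp
  have ha0j : a0 j = α / d * σ j := by rw [ha0]; simp
  have hfinal : (∑ l, v0 l) + β / 2 * ∑ l, ∑ m,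
      ((E l m * a0 l + G l m * v0 l) * a0 m + G l m * a0 l * v0 m)
      = C * (w i + w j) + β * (α / d * σ i * (α / d * σ j)) := by
    rw [hsum, hSE, hS3, hS2, ha0i, ha0j]
    linear_combination hlin
  rw [hfinal, hCw]
  simp only [hθ_def]
  field_simp
  rw [hd_def]
  ring
end

section
/- Let α > 0, k > 0, and consider β ∈ (0, k/α). Define V(s, β) = s·(1 − s)·( 1/(1 − β·α·s/k) + (β·α·s/k) / (2·(1 − β·α·s/k)²) ) for s ∈ [0, 1]. Then for each such β, the function s ↦ V(s, β) attains its maximum on [0, 1] at a unique point s*(β), this maximizer lies in the open interval (1/2, 1), and the map β ↦ s*(β) is strictly increasing on (0, k/α). -/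
/-- The principal's residual profit (up to the factor `α²`) when a total amount `s` of
equity is distributed according to the balanced neighborhood equity condition, with
`k = 𝟙ᵀG⁻¹𝟙` the sum of equity centralities of the active agents. -/
noncomputable def residualProfit (α k s β : ℝ) : ℝ :=
  s * (1 - s) * (1 / (1 - β * α * s / k)
    + (β * α * s / k) / (2 * (1 - β * α * s / k) ^ 2))

namespace Statement19

/-- The cubic whose root in `(1/2,1)` is the optimal total equity. -/
def Pcub (t s : ℝ) : ℝ := 2 - 4*s + 3*t*s^2 - t^2*s^3

/-- Reparametrized residual profit with `t = βα/k`. -/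
noncomputable def Wfun (t s : ℝ) : ℝ := s*(1-s)*(2-t*s) / (2*(1-t*s)^2)

lemma Pcub_strictAntiOn {t : ℝ} (ht0 : 0 ≤ t) (ht1 : t < 1) :
    StrictAntiOn (Pcub t) (Set.Icc (0:ℝ) 1) := by
  intro s1 hs1 s2 hs2 h
  have ha : t*s1 < 1 := lt_of_le_of_lt (by nlinarith [hs1.1, hs1.2] : t*s1 ≤ t) ht1
  have hb : t*s2 < 1 := lt_of_le_of_lt (by nlinarith [hs2.1, hs2.2] : t*s2 ≤ t) ht1
  have key : Pcub t s1 - Pcub t s2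
      = (s2 - s1) * (1 + (1-t*s1)*(1-t*s2) + (1-t*s1)^2 + (1-t*s2)^2) := by
    unfold Pcub; ring
  nlinarith [mul_pos (sub_pos.2 h)
    (by nlinarith [mul_pos (sub_pos.2 ha) (sub_pos.2 hb), sq_nonneg (1-t*s1), sq_nonneg (1-t*s2)] :
      (0:ℝ) < 1 + (1-t*s1)*(1-t*s2) + (1-t*s1)^2 + (1-t*s2)^2)]

lemma Pcub_exists_root {t : ℝ} (ht : t ∈ Set.Ioo (0:ℝ) 1) :
    ∃ s ∈ Set.Ioo (1/2:ℝ) 1, Pcub t s = 0 := by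
  have hc : ContinuousOn (Pcub t) (Set.Icc (1/2:ℝ) 1) := by
    unfold Pcub; fun_prop
  have h1 : Pcub t 1 < 0 := by unfold Pcub; nlinarith [ht.1, ht.2]
  have h2 : 0 < Pcub t (1/2) := by unfold Pcub; nlinarith [ht.1, ht.2]
  have := intermediate_value_Ioo' (by norm_num : (1/2:ℝ) ≤ 1) hc
  obtain ⟨s, hs, hPs⟩ := this ⟨h1, h2⟩
  exact ⟨s, hs, hPs⟩

open scoped Classical in
/-- The unique maximizer, defined as the root of the cubic. -/
noncomputable def sstarAux (t : ℝ) : ℝ :=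
  if h : ∃ s ∈ Set.Ioo (1/2:ℝ) 1, Pcub t s = 0 then h.choose else 0

lemma sstarAux_spec {t : ℝ} (ht : t ∈ Set.Ioo (0:ℝ) 1) :
    sstarAux t ∈ Set.Ioo (1/2:ℝ) 1 ∧ Pcub t (sstarAux t) = 0 := by
  have h := Pcub_exists_root ht
  simp only [sstarAux, dif_pos h]
  exact ⟨h.choose_spec.1, h.choose_spec.2⟩

lemma hasDerivAt_Wfun (t s : ℝ) (h : (1:ℝ) - t*s ≠ 0) :
    HasDerivAt (fun x => Wfun t x) (Pcub t s / (2*(1-t*s)^3)) s := by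
  have hN : HasDerivAt (fun x : ℝ => x*(1-x)*(2-t*x))
      ((1*(1-s) + s*(-1))*(2-t*s) + s*(1-s)*(-t)) s := by
    simpa using (((hasDerivAt_id s).fun_mul ((hasDerivAt_id s).const_sub 1)).fun_mul
      (((hasDerivAt_id s).const_mul t).const_sub 2))
  have hD : HasDerivAt (fun x : ℝ => 2*(1-t*x)^2) (-(4*t*(1-t*s))) s := by
    have := ((((hasDerivAt_id s).const_mul t).const_sub 1).fun_pow 2).const_mul 2
    convert this using 1
    · rfl
    · rfl
    · rfl
    simp; ring
  have hDne : 2*(1-t*s)^2 ≠ 0 := by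
    intro hc; apply h; nlinarith [sq_nonneg (1 - t*s)]
  have hW := hN.fun_div hD hDne
  have heq : ((1*(1-s) + s*(-1))*(2-t*s) + s*(1-s)*(-t)) * (2*(1-t*s)^2)
      - (s*(1-s)*(2-t*s)) * (-(4*t*(1-t*s))) =
      (Pcub t s / (2*(1-t*s)^3)) * (2*(1-t*s)^2)^2 := by
    unfold Pcub
    field_simp
    ring
  convert hW using 1
  · rfl
  · rfl
  · rfl
  rw [eq_div_iff (pow_ne_zero 2 hDne)]
  linarith [heq]

lemma one_sub_pos {t s : ℝ} (ht0 : 0 ≤ t) (ht1 : t < 1) (hs : s ∈ Set.Icc (0:ℝ) 1) :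
    0 < 1 - t*s := by
  have : t*s ≤ t := by nlinarith [hs.1, hs.2]
  linarith

lemma Wfun_max {t : ℝ} (ht : t ∈ Set.Ioo (0:ℝ) 1) {s : ℝ} (hs : s ∈ Set.Icc (0:ℝ) 1)
    (hne : s ≠ sstarAux t) : Wfun t s < Wfun t (sstarAux t) := by
  obtain ⟨hm, hPm⟩ := sstarAux_spec ht
  set m := sstarAux t with hmdef
  have hm01 : m ∈ Set.Icc (0:ℝ) 1 := ⟨by linarith [hm.1], le_of_lt hm.2⟩
  have hanti := Pcub_strictAntiOn (le_of_lt ht.1) ht.2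
  -- continuity of Wfun on [0,1]
  have hc : ContinuousOn (Wfun t) (Set.Icc (0:ℝ) 1) := by
    unfold Wfun
    apply ContinuousOn.div (by fun_prop) (by fun_prop)
    intro x hx
    have := one_sub_pos (le_of_lt ht.1) ht.2 hx
    positivity
  have hmono : StrictMonoOn (Wfun t) (Set.Icc 0 m) := by
    apply strictMonoOn_of_deriv_pos (convex_Icc _ _)
      (hc.mono (Set.Icc_subset_Icc le_rfl hm01.2))
    intro x hx
    rw [interior_Icc] at hx
    have hx01 : x ∈ Set.Icc (0:ℝ) 1 := ⟨le_of_lt hx.1, le_trans (le_of_lt hx.2) hm01.2⟩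
    have hpos := one_sub_pos (le_of_lt ht.1) ht.2 hx01
    rw [(hasDerivAt_Wfun t x (ne_of_gt hpos)).deriv]
    have hP : 0 < Pcub t x := by
      have := hanti hx01 hm01 hx.2
      rw [hPm] at this; linarith
    positivity
  have hanti' : StrictAntiOn (Wfun t) (Set.Icc m 1) := by
    apply strictAntiOn_of_deriv_neg (convex_Icc _ _)
      (hc.mono (Set.Icc_subset_Icc hm01.1 le_rfl))
    intro x hx
    rw [interior_Icc] at hx
    have hx01 : x ∈ Set.Icc (0:ℝ) 1 := ⟨le_trans hm01.1 (le_of_lt hx.1), le_of_lt hx.2⟩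
    have hpos := one_sub_pos (le_of_lt ht.1) ht.2 hx01
    rw [(hasDerivAt_Wfun t x (ne_of_gt hpos)).deriv]
    have hP : Pcub t x < 0 := by
      have := hanti hm01 hx01 hx.1
      rw [hPm] at this; linarith
    apply div_neg_of_neg_of_pos hP
    positivity
  rcases lt_or_gt_of_ne hne with h | h
  · exact hmono ⟨hs.1, le_of_lt h⟩ ⟨hm01.1, le_rfl⟩ h
  · exact hanti' ⟨le_refl m, hm01.2⟩ ⟨le_of_lt h, hs.2⟩ h

lemma sstarAux_mono {t1 t2 : ℝ} (ht1 : t1 ∈ Set.Ioo (0:ℝ) 1) (ht2 : t2 ∈ Set.Ioo (0:ℝ) 1)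
    (h : t1 < t2) : sstarAux t1 < sstarAux t2 := by
  obtain ⟨hm1, hP1⟩ := sstarAux_spec ht1
  obtain ⟨hm2, hP2⟩ := sstarAux_spec ht2
  set m1 := sstarAux t1
  set m2 := sstarAux t2
  have hm101 : m1 ∈ Set.Icc (0:ℝ) 1 := ⟨by linarith [hm1.1], le_of_lt hm1.2⟩
  have hm201 : m2 ∈ Set.Icc (0:ℝ) 1 := ⟨by linarith [hm2.1], le_of_lt hm2.2⟩
  have hpos : 0 < Pcub t2 m1 := by
    have hdiff : Pcub t2 m1 - Pcub t1 m1 = (t2 - t1) * m1^2 * (3 - (t1+t2)*m1) := by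
      unfold Pcub; ring
    have h1 : (0:ℝ) < m1 := by linarith [hm1.1]
    have h2 : (t1+t2)*m1 < 2 := by nlinarith [ht1.2, ht2.2, hm1.2]
    have h3 : (0:ℝ) < 3 - (t1+t2)*m1 := by linarith
    have := mul_pos (mul_pos (sub_pos.2 h) (pow_pos h1 2)) h3
    linarith
  by_contra hcon
  push_neg at hcon
  rcases eq_or_lt_of_le hcon with heq | hlt
  · rw [heq] at hP2; rw [hP2] at hpos; exact lt_irrefl 0 hpos
  · have := Pcub_strictAntiOn (le_of_lt ht2.1) ht2.2 hm201 hm101 hlt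
    rw [hP2] at this; linarith

end Statement19

open Statement19

/-- for each `β ∈ (0, k/α)`, the function `s ↦ V(s, β)` has a unique
maximizer on `[0, 1]`; this maximizer lies in `(1/2, 1)`, and it is strictly increasing
in `β`. -/
theorem statement_19 (α k : ℝ) (hα : 0 < α) (hk : 0 < k) :
    ∃ sstar : ℝ → ℝ,
      (∀ β ∈ Set.Ioo (0 : ℝ) (k / α),
        sstar β ∈ Set.Ioo (1 / 2 : ℝ) 1 ∧
        (∀ s ∈ Set.Icc (0 : ℝ) 1, residualProfit α k s β ≤ residualProfit α k (sstar β) β) ∧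
        (∀ s ∈ Set.Icc (0 : ℝ) 1,
          (∀ s' ∈ Set.Icc (0 : ℝ) 1, residualProfit α k s' β ≤ residualProfit α k s β) →
          s = sstar β)) ∧
      StrictMonoOn sstar (Set.Ioo (0 : ℝ) (k / α)) := by
  -- reparametrize t = β α / k
  have htmem : ∀ β ∈ Set.Ioo (0:ℝ) (k/α), β*α/k ∈ Set.Ioo (0:ℝ) 1 := by
    intro β hβ
    constructor
    · exact div_pos (mul_pos hβ.1 hα) hk
    · rw [div_lt_one hk]
      have := (lt_div_iff₀ hα).mp hβ.2
      linarith
  have hWeq : ∀ β ∈ Set.Ioo (0:ℝ) (k/α), ∀ s ∈ Set.Icc (0:ℝ) 1,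
      residualProfit α k s β = Wfun (β*α/k) s := by
    intro β hβ s hs
    have ht := htmem β hβ
    have hpos : 0 < 1 - (β*α/k)*s := one_sub_pos (le_of_lt ht.1) ht.2 hs
    have hpos' : (0:ℝ) < 1 - β*α*s/k := by
      have : β*α*s/k = (β*α/k)*s := by ring
      rw [this]; exact hpos
    have h2 : (1:ℝ) - β*α/k*s ≠ 0 := ne_of_gt hpos
    have hrw : β*α*s/k = β*α/k*s := by ring
    unfold residualProfit Wfun
    rw [hrw]
    generalize hgen : β*α/k*s = u at h2 ⊢
    field_simp
    ring
  refine ⟨fun β => sstarAux (β*α/k), ?_, ?_⟩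
  · intro β hβ
    have ht := htmem β hβ
    obtain ⟨hm, _⟩ := sstarAux_spec ht
    have hm01 : sstarAux (β*α/k) ∈ Set.Icc (0:ℝ) 1 := ⟨by linarith [hm.1], le_of_lt hm.2⟩
    refine ⟨hm, ?_, ?_⟩
    · intro s hs
      rw [hWeq β hβ s hs, hWeq β hβ _ hm01]
      rcases eq_or_ne s (sstarAux (β*α/k)) with h | h
      · rw [h]
      · exact le_of_lt (Wfun_max ht hs h)
    · intro s hs hmax
      by_contra h
      have h1 := Wfun_max ht hs h
      have h2 := hmax _ hm01
      rw [hWeq β hβ s hs, hWeq β hβ _ hm01] at h2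
      linarith
  · intro β1 hβ1 β2 hβ2 h
    apply sstarAux_mono (htmem β1 hβ1) (htmem β2 hβ2)
    have h' : β1 * α < β2 * α := mul_lt_mul_of_pos_right h hα
    gcongr
end
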